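/- Let ℓ ≥ 1 be an integer, a = 2π/(2ℓ+1), ρ = exp(2πi/(2ℓ+1)), and let ψ ∈ ℝ. Let g_ψ be the rotation matrix with rows (1,0,0), (0,cos ψ,-sin ψ), (0,sin ψ,cos ψ). Then for every integer j with -ℓ ≤ j ≤ ℓ and every X ∈ ℝ³: ((g_ψ X)·N_j)^ℓ = Σ_{k=-ℓ}^{ℓ} [ (1/(2ℓ+1))·Σ_{n=-ℓ}^{ℓ} e^{i n ψ}·ρ^{n(j-k)} ] · (X·N_k)^ℓ. -/

import Mathlib

open Real

/-- The null vector `N(α) = (1, i sin α, i cos α) ∈ ℂ³`. -/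
noncomputable def Nvec (α : ℝ) : Fin 3 → ℂ :=
  ![1, Complex.I * Real.sin α, Complex.I * Real.cos α]

/-- The bilinear (non-Hermitian) pairing of `X ∈ ℝ³` with `Z ∈ ℂ³`. -/
noncomputable def dotRC (X : Fin 3 → ℝ) (Z : Fin 3 → ℂ) : ℂ :=
  ∑ i, (X i : ℂ) * Z i

/-- The rotation of angle `ψ` about the first axis. -/
noncomputable def rotX (ψ : ℝ) : Matrix (Fin 3) (Fin 3) ℝ :=
  !![1, 0, 0; 0, Real.cos ψ, -Real.sin ψ; 0, Real.sin ψ, Real.cos ψ]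

private lemma rot_dot (ψ α : ℝ) (X : Fin 3 → ℝ) :
    dotRC ((rotX ψ).mulVec X) (Nvec α) = dotRC X (Nvec (α + ψ)) := by
  simp [dotRC, rotX, Nvec, Matrix.mulVec, dotProduct, Fin.sum_univ_three,
    Matrix.vecHead, Matrix.vecTail, Real.sin_add, Real.cos_add]
  ring

private lemma exp_decomp (X : Fin 3 → ℝ) (α : ℝ) :
    dotRC X (Nvec α) = (X 0 : ℂ)
      + ((X 1 : ℂ) + (X 2 : ℂ) * Complex.I) / 2 * Complex.exp (Complex.I * α)
      + ((X 2 : ℂ) * Complex.I - (X 1 : ℂ)) / 2 * (Complex.exp (Complex.I * α))⁻¹ := by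
  have h1 : Complex.exp (Complex.I * α) = Complex.cos α + Complex.sin α * Complex.I := by
    rw [mul_comm, Complex.exp_mul_I]
  have h2 : (Complex.exp (Complex.I * α))⁻¹ = Complex.cos α - Complex.sin α * Complex.I := by
    rw [← Complex.exp_neg, show -(Complex.I * α) = (-α : ℂ) * Complex.I by ring,
      Complex.exp_mul_I, Complex.cos_neg, Complex.sin_neg]
    ring
  rw [h2, h1]
  simp only [dotRC, Nvec, Fin.sum_univ_three, Matrix.cons_val_zero, Matrix.cons_val_one,
    Matrix.head_cons, Matrix.cons_val_two, Matrix.tail_cons, Complex.ofReal_sin,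
    Complex.ofReal_cos]
  ring

private lemma pow_decomp (X : Fin 3 → ℝ) (ℓ : ℕ) :
    ∃ b : ℤ → ℂ, ∀ α : ℝ, (dotRC X (Nvec α)) ^ ℓ
      = ∑ n ∈ Finset.Icc (-(ℓ : ℤ)) ℓ, b n * Complex.exp (Complex.I * n * α) := by
  set c0 : ℂ := (X 0 : ℂ)
  set cp : ℂ := ((X 1 : ℂ) + (X 2 : ℂ) * Complex.I) / 2
  set cm : ℂ := ((X 2 : ℂ) * Complex.I - (X 1 : ℂ)) / 2
  set q : Polynomial ℂ := Polynomial.C cm + Polynomial.C c0 * Polynomial.X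
      + Polynomial.C cp * Polynomial.X ^ 2 with hq
  set Q : Polynomial ℂ := q ^ ℓ with hQ
  have hdeg : Q.natDegree < 2 * ℓ + 1 := by
    have hq2 : q.natDegree ≤ 2 := by rw [hq]; compute_degree
    calc Q.natDegree ≤ ℓ * q.natDegree := Polynomial.natDegree_pow_le
    _ ≤ ℓ * 2 := Nat.mul_le_mul_left _ hq2
    _ < 2 * ℓ + 1 := by omega
  refine ⟨fun n => Q.coeff (n + ℓ).toNat, fun α => ?_⟩
  set E : ℂ := Complex.exp (Complex.I * α) with hE
  have hE0 : E ≠ 0 := Complex.exp_ne_zero _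
  have h1 : dotRC X (Nvec α) = E⁻¹ * (cm + c0 * E + cp * E ^ 2) := by
    rw [exp_decomp]
    field_simp
    ring
  have h2 : (dotRC X (Nvec α)) ^ ℓ = (E⁻¹) ^ ℓ * Q.eval E := by
    rw [h1, mul_pow, hQ, Polynomial.eval_pow]
    simp [hq]
  rw [h2, Polynomial.eval_eq_sum_range' hdeg]
  rw [Finset.mul_sum]
  refine Finset.sum_nbij' (fun m => (m : ℤ) - ℓ) (fun n => (n + ℓ).toNat) ?_ ?_ ?_ ?_ ?_
  · intro m hm
    simp only [Finset.mem_range] at hm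
    simp only [Finset.mem_Icc]
    omega
  · intro n hn
    simp only [Finset.mem_Icc] at hn
    simp only [Finset.mem_range]
    omega
  · intro m hm; simp only [Finset.mem_range] at hm; omega
  · intro n hn; simp only [Finset.mem_Icc] at hn; omega
  · intro m hm
    simp only [Finset.mem_range] at hm
    dsimp only
    have h3 : ((m : ℤ) - ℓ + ℓ).toNat = m := by omega
    rw [h3]
    have h4 : E⁻¹ ^ ℓ * E ^ m = E ^ ((m : ℤ) - ℓ) := by
      rw [zpow_sub₀ hE0, zpow_natCast]
      rw [inv_pow, div_eq_mul_inv, mul_comm, zpow_natCast]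
    have h5 : Complex.exp (Complex.I * ((((m : ℤ) - (ℓ : ℤ) : ℤ)) : ℂ) * α) = E ^ ((m : ℤ) - ℓ) := by
      rw [hE, ← Complex.exp_int_mul]
      congr 1
      push_cast
      ring
    rw [h5, ← h4]
    ring

private lemma rho_pow (ℓ : ℕ) (n m : ℤ) :
    Complex.exp (Complex.I * n * (((m : ℝ) * (2 * π / (2 * ℓ + 1)) : ℝ) : ℂ))
      = Complex.exp (2 * π * Complex.I / (2 * ℓ + 1)) ^ (n * m) := by
  rw [← Complex.exp_int_mul]
  have hN : ((2 * ℓ + 1 : ℕ) : ℂ) ≠ 0 := Nat.cast_ne_zero.mpr (by omega)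
  push_cast at hN ⊢
  field_simp

private lemma rho_N (ℓ : ℕ) :
    Complex.exp (2 * π * Complex.I / (2 * ℓ + 1)) ^ ((2 * ℓ + 1 : ℤ)) = 1 := by
  rw [← Complex.exp_int_mul]
  have hN : ((2 * ℓ + 1 : ℕ) : ℂ) ≠ 0 := Nat.cast_ne_zero.mpr (by omega)
  push_cast at hN ⊢
  rw [show ((2 * ℓ + 1 : ℂ)) * (2 * π * Complex.I / (2 * ℓ + 1)) = 2 * π * Complex.I by
    field_simp]
  simpa [mul_comm, mul_assoc] using Complex.exp_two_pi_mul_I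

private lemma orth (ℓ : ℕ) (d : ℤ) (hd : d.natAbs ≤ 2 * ℓ) :
    ∑ k ∈ Finset.Icc (-(ℓ : ℤ)) ℓ,
        Complex.exp (2 * π * Complex.I / (2 * ℓ + 1)) ^ (d * k)
      = if d = 0 then (2 * ℓ + 1 : ℂ) else 0 := by
  set ρ : ℂ := Complex.exp (2 * π * Complex.I / (2 * ℓ + 1)) with hρ
  have hρ0 : ρ ≠ 0 := Complex.exp_ne_zero _
  by_cases h0 : d = 0
  · subst h0
    simp [Int.card_Icc]
    rw [show ((ℓ:ℤ) + 1 + ℓ).toNat = 2 * ℓ + 1 by omega]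
    push_cast
    ring
  · simp only [h0, if_false]
    have key : ∑ k ∈ Finset.Icc (-(ℓ : ℤ)) ℓ, ρ ^ (d * k)
        = ρ ^ (-(d * ℓ)) * ∑ t ∈ Finset.range (2 * ℓ + 1), (ρ ^ d) ^ t := by
      rw [Finset.mul_sum]
      refine Finset.sum_nbij' (fun k => (k + ℓ).toNat) (fun t => (t : ℤ) - ℓ) ?_ ?_ ?_ ?_ ?_
      · intro k hk; simp only [Finset.mem_Icc] at hk; simp only [Finset.mem_range]; omega
      · intro t ht; simp only [Finset.mem_range] at ht; simp only [Finset.mem_Icc]; omega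
      · intro k hk; simp only [Finset.mem_Icc] at hk; omega
      · intro t ht; simp only [Finset.mem_range] at ht; omega
      · intro k hk
        simp only [Finset.mem_Icc] at hk
        rw [← zpow_natCast (ρ ^ d), ← zpow_mul, ← zpow_add₀ hρ0]
        have hco : ((k + (ℓ:ℤ)).toNat : ℤ) = k + ℓ := by omega
        congr 1
        rw [hco]
        ring
    rw [key]
    have hx1 : ρ ^ d ≠ 1 := by
      intro h
      rw [hρ, ← Complex.exp_int_mul, Complex.exp_eq_one_iff] at h
      obtain ⟨n, hn⟩ := h
      have hN : ((2 * ℓ + 1 : ℕ) : ℂ) ≠ 0 := Nat.cast_ne_zero.mpr (by omega)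
      push_cast at hN hn
      have hπ : (π : ℂ) ≠ 0 := by
        simpa using Complex.ofReal_ne_zero.mpr (ne_of_gt Real.pi_pos)
      have h2 : (2 : ℂ) * π * Complex.I ≠ 0 := by
        simp [hπ, Complex.I_ne_zero]
      have hd2 : (d : ℂ) = n * (2 * ℓ + 1) := by
        field_simp at hn
        apply mul_right_cancel₀ h2
        rw [hn]
        ring
      have hd3 : d = n * (2 * (ℓ:ℤ) + 1) := by exact_mod_cast hd2
      rcases eq_or_ne n 0 with rfl | hn0
      · simp at hd3; exact h0 hd3
      · rw [hd3, Int.natAbs_mul] at hd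
        have hX : ((2 * (ℓ:ℤ) + 1)).natAbs = 2 * ℓ + 1 := by omega
        rw [hX] at hd
        have h1 : 1 ≤ n.natAbs := by omega
        have : 2 * ℓ + 1 ≤ n.natAbs * (2 * ℓ + 1) := by
          calc 2 * ℓ + 1 = 1 * (2 * ℓ + 1) := by ring
          _ ≤ n.natAbs * (2 * ℓ + 1) := Nat.mul_le_mul_right _ h1
        omega
    rw [geom_sum_eq hx1]
    have hxN : (ρ ^ d) ^ (2 * ℓ + 1) = 1 := by
      have hc : ρ ^ (((2 * ℓ + 1 : ℕ) : ℤ)) = 1 := by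
        rw [show (((2 * ℓ + 1 : ℕ) : ℤ)) = (2 * (ℓ:ℤ) + 1) by push_cast; ring]
        exact rho_N ℓ
      rw [← zpow_natCast (ρ ^ d), ← zpow_mul, mul_comm, zpow_mul, hc, one_zpow]
    rw [hxN]
    simp

/-- Transformation of the basis functions `Φ_j = (· ⋅ N_j)^ℓ` under the rotation
`g_ψ` about the first axis: `Φ_j ∘ g_ψ = Σ_k [(1/(2ℓ+1)) Σ_n e^{inψ} ρ^{n(j-k)}] Φ_k`,
with `ρ = e^{2πi/(2ℓ+1)}`. -/
theorem so2_action_Phi (ℓ : ℕ) (hℓ : 1 ≤ ℓ) (ψ : ℝ)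
    (j : ℤ) (hj : j ∈ Finset.Icc (-(ℓ : ℤ)) ℓ) (X : Fin 3 → ℝ) :
    (dotRC ((rotX ψ).mulVec X) (Nvec ((j : ℝ) * (2 * π / (2 * ℓ + 1))))) ^ ℓ
      = ∑ k ∈ Finset.Icc (-(ℓ : ℤ)) ℓ,
          ((1 / (2 * ℓ + 1) : ℂ) *
              ∑ n ∈ Finset.Icc (-(ℓ : ℤ)) ℓ,
                Complex.exp (Complex.I * n * ψ) *
                  Complex.exp (2 * π * Complex.I / (2 * ℓ + 1)) ^ (n * (j - k))) *
            (dotRC X (Nvec ((k : ℝ) * (2 * π / (2 * ℓ + 1))))) ^ ℓ := by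
  classical
  obtain ⟨b, hb⟩ := pow_decomp X ℓ
  set ρ : ℂ := Complex.exp (2 * π * Complex.I / (2 * ℓ + 1)) with hρ
  have hρ0 : ρ ≠ 0 := Complex.exp_ne_zero _
  set S : Finset ℤ := Finset.Icc (-(ℓ : ℤ)) ℓ with hS
  set a : ℝ := 2 * π / (2 * ℓ + 1) with ha
  set w : ℤ → ℂ := fun n => Complex.exp (Complex.I * n * ψ) with hw
  have hN : (2 * (ℓ:ℂ) + 1) ≠ 0 := by
    have : ((2 * ℓ + 1 : ℕ) : ℂ) ≠ 0 := Nat.cast_ne_zero.mpr (by omega)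
    push_cast at this
    convert this using 2
  -- LHS
  have hLHS : (dotRC ((rotX ψ).mulVec X) (Nvec ((j : ℝ) * a))) ^ ℓ
      = ∑ n ∈ S, b n * (w n * ρ ^ (n * j)) := by
    rw [rot_dot, hb]
    refine Finset.sum_congr rfl fun n hn => ?_
    have : Complex.exp (Complex.I * n * (((j : ℝ) * a + ψ : ℝ) : ℂ))
        = Complex.exp (Complex.I * n * (((j : ℝ) * a : ℝ) : ℂ))
          * Complex.exp (Complex.I * n * (ψ : ℂ)) := by
      rw [← Complex.exp_add]
      congr 1
      push_cast
      ring
    rw [this, rho_pow]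
    rw [hw, hρ]
    ring
  rw [hLHS]
  -- RHS
  have hterm : ∀ k ∈ S, ((1 / (2 * (ℓ:ℂ) + 1)) * ∑ n ∈ S, w n * ρ ^ (n * (j - k))) *
        (dotRC X (Nvec ((k : ℝ) * a))) ^ ℓ
      = ∑ n ∈ S, ∑ m ∈ S,
          (1 / (2 * (ℓ:ℂ) + 1)) * (w n * ρ ^ (n * (j - k))) * (b m * ρ ^ (m * k)) := by
    intro k hk
    rw [hb]
    have hΦ : ∑ m ∈ S, b m * Complex.exp (Complex.I * m * (((k : ℝ) * a : ℝ) : ℂ))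
        = ∑ m ∈ S, b m * ρ ^ (m * k) := by
      refine Finset.sum_congr rfl fun m hm => ?_
      rw [rho_pow, hρ]
    rw [hΦ, mul_assoc, Finset.sum_mul_sum, Finset.mul_sum]
    refine Finset.sum_congr rfl fun n hn => ?_
    rw [Finset.mul_sum]
    refine Finset.sum_congr rfl fun m hm => ?_
    ring
  rw [Finset.sum_congr rfl hterm]
  rw [Finset.sum_comm]
  refine Finset.sum_congr rfl fun n hn => ?_
  rw [Finset.sum_comm]
  have hinner : ∀ m ∈ S, ∑ k ∈ S,
        (1 / (2 * (ℓ:ℂ) + 1)) * (w n * ρ ^ (n * (j - k))) * (b m * ρ ^ (m * k))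
      = (1 / (2 * (ℓ:ℂ) + 1)) * w n * b m * ρ ^ (n * j) *
          (if m - n = 0 then (2 * (ℓ:ℂ) + 1) else 0) := by
    intro m hm
    have hsplit : ∀ k : ℤ, ρ ^ (n * (j - k)) * ρ ^ (m * k) = ρ ^ (n * j) * ρ ^ ((m - n) * k) := by
      intro k
      rw [← zpow_add₀ hρ0, ← zpow_add₀ hρ0]
      congr 1
      ring
    have : ∑ k ∈ S, (1 / (2 * (ℓ:ℂ) + 1)) * (w n * ρ ^ (n * (j - k))) * (b m * ρ ^ (m * k))
        = (1 / (2 * (ℓ:ℂ) + 1)) * w n * b m * ρ ^ (n * j) * ∑ k ∈ S, ρ ^ ((m - n) * k) := by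
      rw [Finset.mul_sum]
      refine Finset.sum_congr rfl fun k hk => ?_
      have := hsplit k
      calc (1 / (2 * (ℓ:ℂ) + 1)) * (w n * ρ ^ (n * (j - k))) * (b m * ρ ^ (m * k))
          = (1 / (2 * (ℓ:ℂ) + 1)) * w n * b m * (ρ ^ (n * (j - k)) * ρ ^ (m * k)) := by ring
      _ = (1 / (2 * (ℓ:ℂ) + 1)) * w n * b m * (ρ ^ (n * j) * ρ ^ ((m - n) * k)) := by rw [this]
      _ = (1 / (2 * (ℓ:ℂ) + 1)) * w n * b m * ρ ^ (n * j) * ρ ^ ((m - n) * k) := by ring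
    rw [this]
    have habs : (m - n).natAbs ≤ 2 * ℓ := by
      simp only [hS, Finset.mem_Icc] at hm hn
      omega
    have := orth ℓ (m - n) habs
    rw [hρ] at *
    rw [this]
  rw [Finset.sum_congr rfl hinner]
  have hnS : n ∈ S := hn
  rw [Finset.sum_eq_single n]
  · simp only [sub_self, if_pos rfl, if_pos trivial]
    field_simp
  · intro m hm hmn
    rw [if_neg (by omega)]
    ring
  · intro h
    exact absurd hnS h
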